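/- Let α be real, q ∈ {1, −1}, and c > 0. Define φ : ℝ → ℂ by φ(x) = (x − i·c)^(1/2 − q·α) · exp(−(x − i·c)²/2), where z^w denotes the principal complex power. Then φ is twice differentiable and for every real x, −φ''(x) + ((x − i·c)² + (α² − 1/4)/(x − i·c)²)·φ(x) = (2 − 2·q·α)·φ(x). -/

import Mathlib

open Complex

/-- For real `α`, `q ∈ {1, −1}`, `c > 0`, the function
`φ(x) = (x − ic)^(1/2 − qα) · exp(−(x − ic)²/2)` (principal complex power) is twice
differentiable and solves the PT-symmetric harmonic oscillator Schrödinger equation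
`−φ'' + ((x − ic)² + (α² − 1/4)/(x − ic)²) φ = (2 − 2qα) φ`. -/
theorem stmt_12 (α q c : ℝ) (hq : q = 1 ∨ q = -1) (hc : 0 < c)
    (φ : ℝ → ℂ)
    (hφ : ∀ x : ℝ, φ x =
      ((x : ℂ) - Complex.I * (c : ℂ)) ^ ((1 / 2 : ℂ) - (q : ℂ) * (α : ℂ)) *
        Complex.exp (-((x : ℂ) - Complex.I * (c : ℂ)) ^ 2 / 2)) :
    ∃ φ' φ'' : ℝ → ℂ,
      (∀ x : ℝ, HasDerivAt φ (φ' x) x) ∧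
      (∀ x : ℝ, HasDerivAt φ' (φ'' x) x) ∧
      (∀ x : ℝ,
        -φ'' x + (((x : ℂ) - Complex.I * (c : ℂ)) ^ 2 +
            ((α : ℂ) ^ 2 - 1 / 4) / ((x : ℂ) - Complex.I * (c : ℂ)) ^ 2) * φ x =
          (2 - 2 * (q : ℂ) * (α : ℂ)) * φ x) := by
  set s : ℂ := (1 / 2 : ℂ) - (q : ℂ) * (α : ℂ) with hs
  -- work over ℂ
  set z : ℂ → ℂ := fun w => w - Complex.I * (c : ℂ) with hzdef
  have him : ∀ x : ℝ, (z x).im = -c := by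
    intro x; simp [hzdef]
  have hz0 : ∀ x : ℝ, z x ≠ 0 := by
    intro x h
    have := congrArg Complex.im h
    rw [him x] at this
    simp at this
    linarith
  have hslit : ∀ x : ℝ, z x ∈ Complex.slitPlane := by
    intro x
    rw [Complex.mem_slitPlane_iff]
    right; rw [him x]; exact neg_ne_zero.mpr (ne_of_gt hc)
  have hz : ∀ w : ℂ, HasDerivAt z 1 w := by
    intro w
    exact (hasDerivAt_id' w).sub_const (Complex.I * (c : ℂ))
  set g : ℂ → ℂ := fun w => Complex.exp (-(z w) ^ 2 / 2) with hgdef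
  have hg : ∀ w : ℂ, HasDerivAt g (-(z w) * g w) w := by
    intro w
    have h0 : HasDerivAt (fun w => -(z w * z w) / 2) (-(z w)) w := by
      have := (((hz w).mul (hz w)).neg).div_const 2
      refine this.congr_deriv ?_
      ring
    have h1 : HasDerivAt (fun w => -(z w) ^ 2 / 2) (-(z w)) w :=
      h0.congr_of_eventuallyEq (Filter.Eventually.of_forall (fun y => by ring))
    have := h1.cexp
    simp only [hgdef]
    refine this.congr_deriv ?_
    ring
  have hf : ∀ x : ℝ, HasDerivAt (fun w => z w ^ s) (s * z x ^ (s - 1)) (x : ℂ) := by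
    intro x
    have := (hz x).cpow_const (c := s) (hslit x)
    simpa using this
  have hf' : ∀ x : ℝ, HasDerivAt (fun w => z w ^ (s - 1)) ((s - 1) * z x ^ (s - 2)) (x : ℂ) := by
    intro x
    have := (hz x).cpow_const (c := s - 1) (hslit x)
    simpa [sub_sub, one_add_one_eq_two] using this
  refine ⟨fun x => s * z x ^ (s - 1) * g x + z x ^ s * (-(z x) * g x),
    fun x => (s * ((s - 1) * z x ^ (s - 2)) * g x + s * z x ^ (s - 1) * (-(z x) * g x))
      + ((s * z x ^ (s - 1)) * (-(z x) * g x)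
        + z x ^ s * ((-1) * g x + -(z x) * (-(z x) * g x))), ?_, ?_, ?_⟩
  · intro x
    have h1 : HasDerivAt (fun w : ℂ => z w ^ s * g w)
        (s * z x ^ (s - 1) * g x + z x ^ s * (-(z x) * g x)) (x : ℂ) := (hf x).mul (hg x)
    have h2 := h1.comp_ofReal
    exact h2.congr_of_eventuallyEq (Filter.Eventually.of_forall hφ)
  · intro x
    have h1 : HasDerivAt (fun w : ℂ => s * z w ^ (s - 1) * g w)
        (s * ((s - 1) * z x ^ (s - 2)) * g x + s * z x ^ (s - 1) * (-(z x) * g x)) (x : ℂ) :=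
      ((hf' x).const_mul s).mul (hg x)
    have h2 : HasDerivAt (fun w : ℂ => -(z w) * g w)
        ((-1) * g x + -(z x) * (-(z x) * g x)) (x : ℂ) := ((hz x).neg).mul (hg x)
    have h3 := (h1.add ((hf x).mul h2)).comp_ofReal
    exact h3
  · intro x
    have hq2 : (q : ℂ) * (q : ℂ) = 1 := by
      rcases hq with h | h <;> simp [h]
    have hz2 : (z x) ^ 2 ≠ 0 := pow_ne_zero 2 (hz0 x)
    have e1 : (z x : ℂ) ^ (s - 1) = z x ^ (s - 2) * z x := by
      have h : s - 1 = s - 2 + 1 := by ring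
      rw [h, Complex.cpow_add _ _ (hz0 x), Complex.cpow_one]
    have e2 : (z x : ℂ) ^ s = z x ^ (s - 2) * z x ^ 2 := by
      have h : s = s - 1 + 1 := by ring
      rw [h, Complex.cpow_add _ _ (hz0 x), Complex.cpow_one, e1]
      ring
    rw [hφ x]
    show -(s * ((s - 1) * z x ^ (s - 2)) * g x + s * z x ^ (s - 1) * (-(z x) * g x)
        + ((s * z x ^ (s - 1)) * (-(z x) * g x)
          + z x ^ s * ((-1) * g x + -(z x) * (-(z x) * g x))))
      + (z x ^ 2 + ((α : ℂ) ^ 2 - 1 / 4) / z x ^ 2) * (z x ^ s * g x)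
      = (2 - 2 * (q : ℂ) * (α : ℂ)) * (z x ^ s * g x)
    rw [e1, e2]
    generalize hu : (z x : ℂ) ^ (s - 2) = u
    generalize hG : g (x : ℂ) = G
    rw [hs]
    generalize hw : z (x : ℂ) = w at hz2 ⊢
    have hw0 : w ≠ 0 := by rintro rfl; simp at hz2
    field_simp
    ring_nf
    linear_combination (-16 * (α : ℂ) ^ 2 * u * G) * hq2
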